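/- arXiv:0805.0087 — 3 statements merged into one kernel-verified Lean document; each statement's English description precedes it below -/
import Mathlib

section
/- Let c > 0 and T_r > 0 be constants, and let f, x, y, k be points of the Euclidean plane with dist(f, x) > 0, dist(f, y) > 0, dist(k, x) > 0, dist(k, y) > 0. If dist(k, y) · dist(f, x) = dist(f, y) · dist(k, x) (i.e., k lies on the deception circle of f for receivers x and y), then the transmission strength T := T_r · dist(f, x)²/dist(k, x)² is positive and satisfies both c·T/dist(f, x)² = c·T_r/dist(k, x)² and c·T/dist(f, y)² = c·T_r/dist(k, y)². That is, a transmission by f at strength T produces at both x and y exactly the received signal strength they would measure from a node located at k transmitting at strength T_r. -/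
/-- If `k` lies on the deception circle of the faulty node `f` for receivers `x` and `y`
(i.e. `dist k y * dist f x = dist f y * dist k x`), then the transmission strength
`T = T_r * dist f x ² / dist k x ²` is positive and a transmission from `f` at strength
`T` produces at both `x` and `y` exactly the RSS of a transmission from `k` at the
standard strength `T_r` (free-space model `R = c T / r²`). -/
theorem deception_circle_matching_TSS
    (c T_r : ℝ) (hc : 0 < c) (hT : 0 < T_r)
    (f x y k : EuclideanSpace ℝ (Fin 2))
    (hfx : 0 < dist f x) (hfy : 0 < dist f y)
    (hkx : 0 < dist k x) (hky : 0 < dist k y)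
    (hcirc : dist k y * dist f x = dist f y * dist k x) :
    0 < T_r * dist f x ^ 2 / dist k x ^ 2 ∧
    c * (T_r * dist f x ^ 2 / dist k x ^ 2) / dist f x ^ 2 = c * T_r / dist k x ^ 2 ∧
    c * (T_r * dist f x ^ 2 / dist k x ^ 2) / dist f y ^ 2 = c * T_r / dist k y ^ 2 := by
  refine ⟨by positivity, ?_, ?_⟩
  · field_simp
  · have h2 : dist k y ^ 2 * dist f x ^ 2 = dist f y ^ 2 * dist k x ^ 2 := by
      have h := congrArg (· ^ 2) hcirc
      simp only [mul_pow] at h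
      exact h
    field_simp
    nlinarith [h2, mul_pos hc hT]
end

section
/- Let c, T_r, R_min > 0 be constants and r_t = √(c·T_r/R_min). Let f, x, y, k be points of the Euclidean plane with dist(f, x) > 0, dist(f, y) > 0 and dist(k, x) > 0. Then there exists a transmission strength T > 0 such that c·T/dist(f, x)² = c·T_r/dist(k, x)² (the RSS at x matches a transmission from k at strength T_r) and c·T/dist(f, y)² < R_min (y does not receive the message) if and only if dist(k, x) > r_t · dist(f, x)/dist(f, y). In other words, a faulty node f can deceive the single receiver x with a fictitious location k, unnoticed by y, exactly when k lies outside the circle of radius r_t·dist(f, x)/dist(f, y) around x. -/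
/-- Single-receiver deception: with range `r_t = √(c T_r / R_min)`, the faulty node `f`
can choose a transmission strength `T > 0` whose RSS at `x` matches a transmission from
the fictitious location `k` at strength `T_r`, while `y` does not receive the message
(RSS below `R_min`), if and only if `dist k x > r_t * dist f x / dist f y`. -/
theorem single_receiver_deception_iff
    (c T_r R_min : ℝ) (hc : 0 < c) (hT : 0 < T_r) (hR : 0 < R_min)
    (f x y k : EuclideanSpace ℝ (Fin 2))
    (hfx : 0 < dist f x) (hfy : 0 < dist f y) (hkx : 0 < dist k x) :
    (∃ T : ℝ, 0 < T ∧
        c * T / dist f x ^ 2 = c * T_r / dist k x ^ 2 ∧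
        c * T / dist f y ^ 2 < R_min) ↔
      dist k x > Real.sqrt (c * T_r / R_min) * dist f x / dist f y := by
  set a := dist f x
  set b := dist f y
  set d := dist k x
  have hs : 0 < c * T_r / R_min := by positivity
  set s := Real.sqrt (c * T_r / R_min) with hsdef
  have hs0 : 0 < s := Real.sqrt_pos.mpr hs
  have hs2 : s ^ 2 = c * T_r / R_min := Real.sq_sqrt hs.le
  have hsab : (s * a / b) ^ 2 = c * T_r * a ^ 2 / (R_min * b ^ 2) := by
    rw [div_pow, mul_pow, hs2]
    field_simp
  constructor
  · rintro ⟨T, hTpos, heq, hlt⟩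
    have heq' : c * T * d ^ 2 = c * T_r * a ^ 2 := by
      field_simp at heq; linear_combination c * heq
    have hlt' : c * T < R_min * b ^ 2 := by
      have := (div_lt_iff₀ (by positivity : (0:ℝ) < b ^ 2)).mp hlt
      linarith
    have h : c * T_r * a ^ 2 < R_min * b ^ 2 * d ^ 2 := by
      nlinarith [mul_lt_mul_of_pos_right hlt' (pow_pos hkx 2)]
    have key : (s * a / b) ^ 2 < d ^ 2 := by
      rw [hsab, div_lt_iff₀ (by positivity : (0:ℝ) < R_min * b ^ 2)]
      nlinarith
    exact lt_of_pow_lt_pow_left₀ 2 hkx.le key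
  · intro hgt
    refine ⟨T_r * a ^ 2 / d ^ 2, by positivity, by field_simp, ?_⟩
    have key : (s * a / b) ^ 2 < d ^ 2 :=
      pow_lt_pow_left₀ hgt (by positivity) (by norm_num)
    rw [hsab] at key
    have h : c * T_r * a ^ 2 < d ^ 2 * (R_min * b ^ 2) :=
      (div_lt_iff₀ (by positivity : (0:ℝ) < R_min * b ^ 2)).mp key
    rw [div_lt_iff₀ (by positivity : (0:ℝ) < b ^ 2), mul_div_assoc',
      div_lt_iff₀ (by positivity : (0:ℝ) < d ^ 2)]
    nlinarith
end

section
/- Let u and f be distinct points of the unit integer grid ℤ² (regarded as points of the Euclidean plane), and let r be any real number with r ≥ dist(f, u). Then there exist grid points v, w ∈ ℤ², both distinct from f and from u and from each other, such that dist(v, u) ≤ √2, dist(w, u) ≤ √2, dist(v, f) ≤ r, dist(w, f) ≤ r, and the three points u, v, w are not collinear. In other words, any broadcast by a faulty grid node f that reaches u also reaches at least two further grid neighbors of u such that the three receivers u, v, w are non-collinear. -/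
/-- Embedding of the unit integer grid `ℤ × ℤ` into the Euclidean plane. -/
noncomputable def gridPt (p : ℤ × ℤ) : EuclideanSpace ℝ (Fin 2) :=
  WithLp.toLp 2 ![(p.1 : ℝ), (p.2 : ℝ)]

lemma dist_grid (p q : ℤ × ℤ) :
    dist (gridPt p) (gridPt q)
      = Real.sqrt (((p.1 - q.1 : ℤ) : ℝ)^2 + ((p.2 - q.2 : ℤ) : ℝ)^2) := by
  rw [EuclideanSpace.dist_eq]
  congr 1
  simp [gridPt, Fin.sum_univ_two, Real.dist_eq, sq_abs]

lemma grid_not_collinear (u p q : ℤ × ℤ) (h : p.1 * q.2 - p.2 * q.1 ≠ 0) :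
    ¬ Collinear ℝ ({gridPt u, gridPt (u+p), gridPt (u+q)} :
      Set (EuclideanSpace ℝ (Fin 2))) := by
  intro hc
  obtain ⟨d, hd⟩ := (collinear_iff_of_mem (Set.mem_insert _ _)).1 hc
  obtain ⟨c₁, hc₁⟩ := hd (gridPt (u+p)) (by simp)
  obtain ⟨c₂, hc₂⟩ := hd (gridPt (u+q)) (by simp)
  have e10 : (p.1 : ℝ) = c₁ * d 0 := by
    have := congrArg (· 0) hc₁
    simp [gridPt, Prod.fst_add, PiLp.add_apply, PiLp.smul_apply, smul_eq_mul] at this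
    linarith
  have e11 : (p.2 : ℝ) = c₁ * d 1 := by
    have := congrArg (· 1) hc₁
    simp [gridPt, Prod.snd_add, PiLp.add_apply, PiLp.smul_apply, smul_eq_mul] at this
    linarith
  have e20 : (q.1 : ℝ) = c₂ * d 0 := by
    have := congrArg (· 0) hc₂
    simp [gridPt, Prod.fst_add, PiLp.add_apply, PiLp.smul_apply, smul_eq_mul] at this
    linarith
  have e21 : (q.2 : ℝ) = c₂ * d 1 := by
    have := congrArg (· 1) hc₂
    simp [gridPt, Prod.snd_add, PiLp.add_apply, PiLp.smul_apply, smul_eq_mul] at this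
    linarith
  have : (p.1 : ℝ) * q.2 - p.2 * q.1 = 0 := by rw [e10, e11, e20, e21]; ring
  exact h (by exact_mod_cast this)

lemma grid_dist_le (p q : ℤ × ℤ) (c : ℝ) (hc : 0 ≤ c)
    (h : (((p.1 - q.1)^2 + (p.2 - q.2)^2 : ℤ) : ℝ) ≤ c^2) :
    dist (gridPt p) (gridPt q) ≤ c := by
  rw [dist_grid]
  calc Real.sqrt (((p.1 - q.1 : ℤ) : ℝ)^2 + ((p.2 - q.2 : ℤ) : ℝ)^2)
      ≤ Real.sqrt (c^2) := by
        apply Real.sqrt_le_sqrt; push_cast at h ⊢; linarith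
    _ = c := by rw [Real.sqrt_sq hc]

/-- Any broadcast of a faulty grid node `f` that reaches the grid node `u ≠ f` (i.e. is
received within every disk of radius `r ≥ dist f u` around `f`) also reaches two further
grid neighbors `v, w` of `u` (at distance at most `√2` from `u`), all distinct from `u`,
`f` and each other, such that the three receivers `u, v, w` are not collinear. -/
theorem grid_broadcast_three_noncollinear_receivers
    (u f : ℤ × ℤ) (huf : u ≠ f) (r : ℝ) (hr : dist (gridPt f) (gridPt u) ≤ r) :
    ∃ v w : ℤ × ℤ,
      v ≠ f ∧ v ≠ u ∧ w ≠ f ∧ w ≠ u ∧ v ≠ w ∧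
      dist (gridPt v) (gridPt u) ≤ Real.sqrt 2 ∧
      dist (gridPt w) (gridPt u) ≤ Real.sqrt 2 ∧
      dist (gridPt v) (gridPt f) ≤ r ∧
      dist (gridPt w) (gridPt f) ≤ r ∧
      ¬ Collinear ℝ ({gridPt u, gridPt v, gridPt w} :
        Set (EuclideanSpace ℝ (Fin 2))) := by
  set a : ℤ := f.1 - u.1 with ha
  set b : ℤ := f.2 - u.2 with hb
  have hab : a ≠ 0 ∨ b ≠ 0 := by
    by_contra h
    push_neg at h
    exact huf (Prod.ext (by omega) (by omega))
  have h0r : (0:ℝ) ≤ r := le_trans dist_nonneg hr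
  have hfu : dist (gridPt f) (gridPt u) = Real.sqrt (((a:ℝ))^2 + ((b:ℝ))^2) := by
    rw [dist_grid]
  -- key: if the squared distance to f is ≤ a² + b², then distance ≤ r
  have key : ∀ v : ℤ × ℤ, (((v.1 - f.1)^2 + (v.2 - f.2)^2 : ℤ) : ℝ) ≤ ((a:ℝ))^2 + ((b:ℝ))^2 →
      dist (gridPt v) (gridPt f) ≤ r := by
    intro v hv
    have h1 : dist (gridPt v) (gridPt f) ≤ Real.sqrt (((a:ℝ))^2 + ((b:ℝ))^2) := by
      rw [dist_grid]
      apply Real.sqrt_le_sqrt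
      push_cast at hv ⊢; linarith
    calc dist (gridPt v) (gridPt f) ≤ Real.sqrt (((a:ℝ))^2 + ((b:ℝ))^2) := h1
      _ = dist (gridPt f) (gridPt u) := hfu.symm
      _ ≤ r := hr
  have sqrt2 : (0:ℝ) ≤ Real.sqrt 2 := Real.sqrt_nonneg 2
  by_cases ha0 : a = 0
  · -- a = 0, b ≠ 0 : v = u + (1, t), w = u + (-1, t) with t = sign of b
    have hb0 : b ≠ 0 := hab.resolve_left (by simp [ha0])
    set t : ℤ := if 0 < b then 1 else -1 with ht
    have hbt : (b - t)^2 + 1 ≤ b^2 := by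
      rcases lt_or_ge 0 b with h | h
      · simp only [ht, if_pos h]; nlinarith
      · have : b < 0 := lt_of_le_of_ne h hb0
        simp only [ht, if_neg (not_lt.mpr h)]; nlinarith
    refine ⟨u + (1, t), u + (-1, t), ?_, ?_, ?_, ?_, ?_, ?_, ?_, ?_, ?_, ?_⟩
    · intro h; have := congrArg Prod.fst h; simp at this; omega
    · intro h; have := congrArg Prod.fst h; simp at this
    · intro h; have := congrArg Prod.fst h; simp at this; omega
    · intro h; have := congrArg Prod.fst h; simp at this
    · intro h; have := congrArg Prod.fst h; simp at this
    · apply grid_dist_le _ _ _ sqrt2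
      rw [Real.sq_sqrt (by norm_num)]
      have : ((u + (1, t)).1 - u.1)^2 + ((u + (1, t)).2 - u.2)^2 = 1 + t^2 := by
        simp [Prod.fst_add, Prod.snd_add]; try ring
      rw [this]
      have : t^2 = 1 := by rcases lt_or_ge 0 b with h | h <;> simp [ht, h, h.not_gt]
      rw [this]; norm_num
    · apply grid_dist_le _ _ _ sqrt2
      rw [Real.sq_sqrt (by norm_num)]
      have : ((u + (-1, t)).1 - u.1)^2 + ((u + (-1, t)).2 - u.2)^2 = 1 + t^2 := by
        simp [Prod.fst_add, Prod.snd_add]; try ring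
      rw [this]
      have : t^2 = 1 := by rcases lt_or_ge 0 b with h | h <;> simp [ht, h, h.not_gt]
      rw [this]; norm_num
    · apply key
      have : ((u + (1, t)).1 - f.1)^2 + ((u + (1, t)).2 - f.2)^2 = (1 - a)^2 + (t - b)^2 := by
        simp [Prod.fst_add, Prod.snd_add, ha, hb]; try ring
      rw [this]
      push_cast
      have : ((1:ℤ) - a)^2 + (t - b)^2 ≤ a^2 + b^2 := by
        rw [ha0]; nlinarith [hbt]
      exact_mod_cast this
    · apply key
      have : ((u + (-1, t)).1 - f.1)^2 + ((u + (-1, t)).2 - f.2)^2 = (-1 - a)^2 + (t - b)^2 := by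
        simp [Prod.fst_add, Prod.snd_add, ha, hb]; try ring
      rw [this]
      push_cast
      have : ((-1:ℤ) - a)^2 + (t - b)^2 ≤ a^2 + b^2 := by
        rw [ha0]; nlinarith [hbt]
      exact_mod_cast this
    · apply grid_not_collinear
      have htne : t ≠ 0 := by rcases lt_or_ge 0 b with h | h <;> simp [ht, h, h.not_gt]
      show (1:ℤ) * t - t * (-1) ≠ 0
      omega
  · by_cases hb0 : b = 0
    · -- a ≠ 0, b = 0 : v = u + (s, 1), w = u + (s, -1)
      set s : ℤ := if 0 < a then 1 else -1 with hs
      have has : (a - s)^2 + 1 ≤ a^2 := by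
        rcases lt_or_ge 0 a with h | h
        · simp only [hs, if_pos h]; nlinarith
        · have : a < 0 := lt_of_le_of_ne h ha0
          simp only [hs, if_neg (not_lt.mpr h)]; nlinarith
      have hs1 : s^2 = 1 := by rcases lt_or_ge 0 a with h | h <;> simp [hs, h, h.not_gt]
      have hsne : s ≠ 0 := by rcases lt_or_ge 0 a with h | h <;> simp [hs, h, h.not_gt]
      refine ⟨u + (s, 1), u + (s, -1), ?_, ?_, ?_, ?_, ?_, ?_, ?_, ?_, ?_, ?_⟩
      · intro h; have := congrArg Prod.snd h; simp at this; omega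
      · intro h; have := congrArg Prod.fst h; simp at this; exact hsne this
      · intro h; have := congrArg Prod.snd h; simp at this; omega
      · intro h; have := congrArg Prod.fst h; simp at this; exact hsne this
      · intro h; have := congrArg Prod.snd h; simp at this
      · apply grid_dist_le _ _ _ sqrt2
        rw [Real.sq_sqrt (by norm_num)]
        have : ((u + (s, 1)).1 - u.1)^2 + ((u + (s, 1)).2 - u.2)^2 = s^2 + 1 := by
          simp [Prod.fst_add, Prod.snd_add]; try ring
        rw [this, hs1]; norm_num
      · apply grid_dist_le _ _ _ sqrt2
        rw [Real.sq_sqrt (by norm_num)]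
        have : ((u + (s, -1)).1 - u.1)^2 + ((u + (s, -1)).2 - u.2)^2 = s^2 + 1 := by
          simp [Prod.fst_add, Prod.snd_add]; try ring
        rw [this, hs1]; norm_num
      · apply key
        have : ((u + (s, 1)).1 - f.1)^2 + ((u + (s, 1)).2 - f.2)^2 = (s - a)^2 + (1 - b)^2 := by
          simp [Prod.fst_add, Prod.snd_add, ha, hb]; try ring
        rw [this]
        push_cast
        have : (s - a)^2 + (1 - b)^2 ≤ a^2 + b^2 := by rw [hb0]; nlinarith [has]
        exact_mod_cast this
      · apply key
        have : ((u + (s, -1)).1 - f.1)^2 + ((u + (s, -1)).2 - f.2)^2 = (s - a)^2 + (-1 - b)^2 := by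
          simp [Prod.fst_add, Prod.snd_add, ha, hb]; try ring
        rw [this]
        push_cast
        have : (s - a)^2 + (-1 - b)^2 ≤ a^2 + b^2 := by rw [hb0]; nlinarith [has]
        exact_mod_cast this
      · apply grid_not_collinear
        show s * (-1) - 1 * s ≠ 0
        omega
    · -- a ≠ 0, b ≠ 0 : v = u + (s, 0), w = u + (0, t)
      set s : ℤ := if 0 < a then 1 else -1 with hs
      set t : ℤ := if 0 < b then 1 else -1 with ht
      have has : (a - s)^2 ≤ a^2 := by
        rcases lt_or_ge 0 a with h | h
        · simp only [hs, if_pos h]; nlinarith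
        · have : a < 0 := lt_of_le_of_ne h ha0
          simp only [hs, if_neg (not_lt.mpr h)]; nlinarith
      have hbt : (b - t)^2 ≤ b^2 := by
        rcases lt_or_ge 0 b with h | h
        · simp only [ht, if_pos h]; nlinarith
        · have : b < 0 := lt_of_le_of_ne h hb0
          simp only [ht, if_neg (not_lt.mpr h)]; nlinarith
      have hs1 : s^2 = 1 := by rcases lt_or_ge 0 a with h | h <;> simp [hs, h, h.not_gt]
      have ht1 : t^2 = 1 := by rcases lt_or_ge 0 b with h | h <;> simp [ht, h, h.not_gt]
      have hsne : s ≠ 0 := by rcases lt_or_ge 0 a with h | h <;> simp [hs, h, h.not_gt]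
      have htne : t ≠ 0 := by rcases lt_or_ge 0 b with h | h <;> simp [ht, h, h.not_gt]
      refine ⟨u + (s, 0), u + (0, t), ?_, ?_, ?_, ?_, ?_, ?_, ?_, ?_, ?_, ?_⟩
      · intro h; apply hb0; have := congrArg Prod.snd h; simp at this; omega
      · intro h; have := congrArg Prod.fst h; simp at this; exact hsne this
      · intro h; apply ha0; have := congrArg Prod.fst h; simp at this; omega
      · intro h; have := congrArg Prod.snd h; simp at this; exact htne this
      · intro h; have := congrArg Prod.fst h; simp at this; exact hsne this
      · apply grid_dist_le _ _ _ sqrt2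
        rw [Real.sq_sqrt (by norm_num)]
        have : ((u + (s, 0)).1 - u.1)^2 + ((u + (s, 0)).2 - u.2)^2 = s^2 := by
          simp [Prod.fst_add, Prod.snd_add]; try ring
        rw [this, hs1]; norm_num
      · apply grid_dist_le _ _ _ sqrt2
        rw [Real.sq_sqrt (by norm_num)]
        have : ((u + (0, t)).1 - u.1)^2 + ((u + (0, t)).2 - u.2)^2 = t^2 := by
          simp [Prod.fst_add, Prod.snd_add]; try ring
        rw [this, ht1]; norm_num
      · apply key
        have : ((u + (s, 0)).1 - f.1)^2 + ((u + (s, 0)).2 - f.2)^2 = (s - a)^2 + b^2 := by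
          simp [Prod.fst_add, Prod.snd_add, ha, hb]; try ring
        rw [this]
        push_cast
        have : (s - a)^2 + b^2 ≤ a^2 + b^2 := by nlinarith [has]
        exact_mod_cast this
      · apply key
        have : ((u + (0, t)).1 - f.1)^2 + ((u + (0, t)).2 - f.2)^2 = a^2 + (t - b)^2 := by
          simp [Prod.fst_add, Prod.snd_add, ha, hb]; try ring
        rw [this]
        push_cast
        have : a^2 + (t - b)^2 ≤ a^2 + b^2 := by nlinarith [hbt]
        exact_mod_cast this
      · apply grid_not_collinear
        show s * t - 0 * 0 ≠ 0
        simpa using mul_ne_zero hsne htne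
end
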